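/- Assume Δ = 0 and γ ≠ 4. Then for every λ ∈ K: (i) if τ(λ·c₂) ∈ G then τ(λ·c₁) ∈ G; (ii) if τ(λ·c₃) ∈ G then τ(λ·c₁) ∈ G; (iii) if τ(λ·c₁) ∈ G then τ(αλ·c₂) ∈ G and τ(βλ·c₃) ∈ G; (iv) if τ(λ·c₂) ∈ G then τ(lλ·c₃) ∈ G; (v) if τ(λ·c₃) ∈ G then τ(mλ·c₂) ∈ G. -/

import Mathlib

noncomputable section

variable {K : Type*} [Field K] [CharZero K]

/-- The linear functional `x ↦ c 0 * x 0 + c 1 * x 1 + c 2 * x 2` on `K³`. -/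
def lf (c : Fin 3 → K) : (Fin 3 → K) →ₗ[K] K :=
  c 0 • LinearMap.proj 0 + c 1 • LinearMap.proj 1 + c 2 • LinearMap.proj 2

/-- `s₁ : x ↦ x − (2x₁ − α x₂ − β x₃)·a₁` where `a₁ = Pi.single 0 1`. -/
def s1 (α β : K) : Module.End K (Fin 3 → K) :=
  LinearMap.id - (lf ![2, -α, -β]).smulRight (Pi.single 0 1)

/-- `s₂ : x ↦ x − (−x₁ + 2x₂ − l·x₃)·a₂`. -/
def s2 (l : K) : Module.End K (Fin 3 → K) :=
  LinearMap.id - (lf ![-1, 2, -l]).smulRight (Pi.single 1 1)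

/-- `s₃ : x ↦ x − (−x₁ − m·x₂ + 2x₃)·a₃`. -/
def s3 (m : K) : Module.End K (Fin 3 → K) :=
  LinearMap.id - (lf ![-1, -m, 2]).smulRight (Pi.single 2 1)

/-- `b = b₁ = (4−γ)a₁ + (l+2)a₂ + (m+2)a₃`, with `γ = l·m`. -/
def bvec (l m : K) : Fin 3 → K := ![4 - l * m, l + 2, m + 2]

/-- `b₂ = (2α+βm)a₁ + (4−β)a₂ + (α+2m)a₃`. -/
def b2vec (α β l m : K) : Fin 3 → K := ![2*α + β*m, 4 - β, α + 2*m]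

/-- `b₃ = (2β+αl)a₁ + (β+2l)a₂ + (4−α)a₃`. -/
def b3vec (α β l m : K) : Fin 3 → K := ![2*β + α*l, β + 2*l, 4 - α]

/-- `τ(λ,μ) : a₁ ↦ a₁ + ω·b, a₂ ↦ a₂ + λ·b, a₃ ↦ a₃ + μ·b`,
where `ω = −(λ(l+2) + μ(m+2))/(4−γ)`. -/
def tau (l m lam mu : K) : Module.End K (Fin 3 → K) :=
  LinearMap.id +
    (lf ![-(lam*(l+2) + mu*(m+2))/(4 - l*m), lam, mu]).smulRight (bvec l m)

/-- `τ` applied to a vector `(λ,μ) ∈ K²`. -/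
def tauv (l m : K) (v : K × K) : Module.End K (Fin 3 → K) := tau l m v.1 v.2

def c1 (α β : K) : K × K := (α, β)
def c2 (l : K) : K × K := (-2, l)
def c3 (m : K) : K × K := (m, -2)

/-- `z₁ : a₁ ↦ −a₁ + (2/(4−γ))·b, a₂ ↦ −a₂, a₃ ↦ −a₃`. -/
def z1 (l m : K) : Module.End K (Fin 3 → K) :=
  -LinearMap.id + (lf ![2/(4 - l*m), 0, 0]).smulRight (bvec l m)

/-- `z₂ : a₂ ↦ −a₂ + (2/(l+2))·b, a₁ ↦ −a₁, a₃ ↦ −a₃`. -/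
def z2 (l m : K) : Module.End K (Fin 3 → K) :=
  -LinearMap.id + (lf ![0, 2/(l+2), 0]).smulRight (bvec l m)

/-- `z₃ : a₃ ↦ −a₃ + (2/(m+2))·b, a₁ ↦ −a₁, a₂ ↦ −a₂`. -/
def z3 (l m : K) : Module.End K (Fin 3 → K) :=
  -LinearMap.id + (lf ![0, 0, 2/(m+2)]).smulRight (bvec l m)

/-- The linear functional `(λ,μ) ↦ c.1·λ + c.2·μ` on `K²`. -/
def lf2 (c : K × K) : (K × K) →ₗ[K] K := c.1 • LinearMap.fst K K K + c.2 • LinearMap.snd K K K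

/-- `σ₁(λ,μ) = (λ,μ) − ((λ(l+2)+μ(m+2))/(4−γ))·(α,β)`. -/
def sigma1 (α β l m : K) : Module.End K (K × K) :=
  LinearMap.id - (lf2 ((l+2)/(4 - l*m), (m+2)/(4 - l*m))).smulRight (α, β)

/-- `σ₂(λ,μ) = (λ,μ) + λ·(−2,l)`. -/
def sigma2 (l : K) : Module.End K (K × K) :=
  LinearMap.id + (LinearMap.fst K K K).smulRight ((-2 : K), l)

/-- `σ₃(λ,μ) = (λ,μ) + μ·(m,−2)`. -/
def sigma3 (m : K) : Module.End K (K × K) :=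
  LinearMap.id + (LinearMap.snd K K K).smulRight (m, (-2 : K))

/-- The sequence `u_x` : `u_x(0)=0, u_x(1)=u_x(2)=1, u_x(3)=x−1,
u_x(n+4) = (x−2)·u_x(n+2) − u_x(n)`. -/
def useq (x : K) : ℕ → K
  | 0 => 0
  | 1 => 1
  | 2 => 1
  | 3 => x - 1
  | (n+4) => (x - 2) * useq x (n+2) - useq x n


variable {α β l m : K}

lemma tau_congr {a b c d : K} (h1 : a = c) (h2 : b = d) :
    tau l m a b = tau l m c d := by rw [h1, h2]

lemma tau_mul (hγ : l*m ≠ 4) (a b c d : K) :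
    tau l m a b * tau l m c d = tau l m (a+c) (b+d) := by
  have h4 : (4 : K) - l*m ≠ 0 := sub_ne_zero.mpr (Ne.symm hγ)
  have h4' : (4 : K) - m*l ≠ 0 := by rw [mul_comm]; exact h4
  apply LinearMap.ext; intro x; funext i
  fin_cases i <;>
    simp [tau, lf, bvec, Module.End.mul_apply, Pi.single_apply, Matrix.vecHead, Matrix.vecTail, Function.comp] <;>
    field_simp <;> (first | ring1 | (left; ring1) | (left; trivial))

lemma s2_tau (hγ : l*m ≠ 4) (a b : K) :
    s2 l * tau l m a b * s2 l = tau l m (-a) (b + l*a) := by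
  have h4 : (4 : K) - l*m ≠ 0 := sub_ne_zero.mpr (Ne.symm hγ)
  have h4' : (4 : K) - m*l ≠ 0 := by rw [mul_comm]; exact h4
  apply LinearMap.ext; intro x; funext i
  fin_cases i <;>
    simp [tau, s2, lf, bvec, Module.End.mul_apply, Pi.single_apply, Matrix.vecHead, Matrix.vecTail, Function.comp] <;>
    field_simp <;> (first | ring1 | (left; ring1) | (left; trivial))

lemma s3_tau (hγ : l*m ≠ 4) (a b : K) :
    s3 m * tau l m a b * s3 m = tau l m (a + m*b) (-b) := by
  have h4 : (4 : K) - l*m ≠ 0 := sub_ne_zero.mpr (Ne.symm hγ)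
  have h4' : (4 : K) - m*l ≠ 0 := by rw [mul_comm]; exact h4
  apply LinearMap.ext; intro x; funext i
  fin_cases i <;>
    simp [tau, s3, lf, bvec, Module.End.mul_apply, Pi.single_apply, Matrix.vecHead, Matrix.vecTail, Function.comp] <;>
    field_simp <;> (first | ring1 | (left; ring1) | (left; trivial))

lemma s1_tau (hΔ : 8 - 2*α - 2*β - 2*(l*m) - (α*l + β*m) = 0) (hγ : l*m ≠ 4)
    (a b w : K) (hw : w * (4 - l*m) = -(a*(l+2) + b*(m+2))) :
    s1 α β * tau l m a b * s1 α β = tau l m (a + w*α) (b + w*β) := by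
  have h4 : (4 : K) - l*m ≠ 0 := sub_ne_zero.mpr (Ne.symm hγ)
  have e1 : -(a * (l + 2) + b * (m + 2)) / (4 - l * m) = w := by
    rw [← hw]; field_simp
  have e2 : -((a + w*α) * (l + 2) + (b + w*β) * (m + 2)) / (4 - l * m) = -w := by
    rw [div_eq_iff h4]
    linear_combination -hw + w * hΔ
  rw [tau, tau, e1, e2]
  apply LinearMap.ext; intro x; funext i
  fin_cases i <;>
    simp [s1, lf, bvec, Module.End.mul_apply, Pi.single_apply, Matrix.vecHead, Matrix.vecTail, Function.comp] <;>
    (first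
      | ring1
      | (left; ring1)
      | linear_combination (-(w * x 0) + (a + w*α) * x 1 + (b + w*β) * x 2) * hΔ
      | linear_combination ((w * x 0) - (a + w*α) * x 1 - (b + w*β) * x 2) * hΔ
      | (left; linear_combination (-(w * x 0) + (a + w*α) * x 1 + (b + w*β) * x 2) * hΔ)
      | (left; linear_combination ((w * x 0) - (a + w*α) * x 1 - (b + w*β) * x 2) * hΔ))
/-- with `Δ = 0`, `γ ≠ 4`, and `G` the group generated by `s₁,s₂,s₃`:
(i) `τ(λc₂) ∈ G → τ(λc₁) ∈ G`; (ii) `τ(λc₃) ∈ G → τ(λc₁) ∈ G`;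
(iii) `τ(λc₁) ∈ G → τ(αλc₂) ∈ G ∧ τ(βλc₃) ∈ G`; (iv) `τ(λc₂) ∈ G → τ(lλc₃) ∈ G`;
(v) `τ(λc₃) ∈ G → τ(mλc₂) ∈ G`. -/
theorem stmt7 (α β l m : K)
    (hΔ : 8 - 2*α - 2*β - 2*(l*m) - (α*l + β*m) = 0) (hγ : l*m ≠ 4)
    (lam : K) :
    (tauv l m (lam • c2 l) ∈ Submonoid.closure {s1 α β, s2 l, s3 m} →
      tauv l m (lam • c1 α β) ∈ Submonoid.closure {s1 α β, s2 l, s3 m}) ∧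
    (tauv l m (lam • c3 m) ∈ Submonoid.closure {s1 α β, s2 l, s3 m} →
      tauv l m (lam • c1 α β) ∈ Submonoid.closure {s1 α β, s2 l, s3 m}) ∧
    (tauv l m (lam • c1 α β) ∈ Submonoid.closure {s1 α β, s2 l, s3 m} →
      tauv l m ((α*lam) • c2 l) ∈ Submonoid.closure {s1 α β, s2 l, s3 m} ∧
      tauv l m ((β*lam) • c3 m) ∈ Submonoid.closure {s1 α β, s2 l, s3 m}) ∧
    (tauv l m (lam • c2 l) ∈ Submonoid.closure {s1 α β, s2 l, s3 m} →
      tauv l m ((l*lam) • c3 m) ∈ Submonoid.closure {s1 α β, s2 l, s3 m}) ∧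
    (tauv l m (lam • c3 m) ∈ Submonoid.closure {s1 α β, s2 l, s3 m} →
      tauv l m ((m*lam) • c2 l) ∈ Submonoid.closure {s1 α β, s2 l, s3 m}) := by
  set N := Submonoid.closure {s1 α β, s2 l, s3 m} with hN
  have hs1 : s1 α β ∈ N := Submonoid.subset_closure (by simp)
  have hs2 : s2 l ∈ N := Submonoid.subset_closure (by simp)
  have hs3 : s3 m ∈ N := Submonoid.subset_closure (by simp)
  have hc1 : tauv l m (lam • c1 α β) = tau l m (lam * α) (lam * β) := by
    simp [tauv, c1, smul_eq_mul]
  have hc2 : tauv l m (lam • c2 l) = tau l m (lam * (-2)) (lam * l) := by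
    simp [tauv, c2, smul_eq_mul]
  have hc3 : tauv l m (lam • c3 m) = tau l m (lam * m) (lam * (-2)) := by
    simp [tauv, c3, smul_eq_mul]
  have hc2' : ∀ μ : K, tauv l m (μ • c2 l) = tau l m (μ * (-2)) (μ * l) := by
    intro μ; simp [tauv, c2, smul_eq_mul]
  have hc3' : ∀ μ : K, tauv l m (μ • c3 m) = tau l m (μ * m) (μ * (-2)) := by
    intro μ; simp [tauv, c3, smul_eq_mul]
  refine ⟨?_, ?_, ?_, ?_, ?_⟩
  · -- (i)
    intro h
    rw [hc2] at h
    rw [hc1, show tau l m (lam * α) (lam * β)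
        = (s2 l * tau l m (lam * (-2)) (lam * l) * s2 l) *
          (s1 α β * tau l m (lam * (-2)) (lam * l) * s1 α β) by
      rw [s2_tau hγ, s1_tau hΔ hγ _ _ lam (by ring), tau_mul hγ]
      exact tau_congr (by ring) (by ring)]
    exact mul_mem (mul_mem (mul_mem hs2 h) hs2) (mul_mem (mul_mem hs1 h) hs1)
  · -- (ii)
    intro h
    rw [hc3] at h
    rw [hc1, show tau l m (lam * α) (lam * β)
        = (s3 m * tau l m (lam * m) (lam * (-2)) * s3 m) *
          (s1 α β * tau l m (lam * m) (lam * (-2)) * s1 α β) by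
      rw [s3_tau hγ, s1_tau hΔ hγ _ _ lam (by ring), tau_mul hγ]
      exact tau_congr (by ring) (by ring)]
    exact mul_mem (mul_mem (mul_mem hs3 h) hs3) (mul_mem (mul_mem hs1 h) hs1)
  · -- (iii)
    intro h
    rw [hc1] at h
    constructor
    · rw [hc2' (α * lam), show tau l m (α * lam * (-2)) (α * lam * l)
          = (s1 α β * tau l m (lam * α) (lam * β) * s1 α β) *
            (s2 l * tau l m (lam * α) (lam * β) * s2 l) by
        rw [s1_tau hΔ hγ _ _ (-2 * lam) (by linear_combination (-lam) * hΔ),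
          s2_tau hγ, tau_mul hγ]
        exact tau_congr (by ring) (by ring)]
      exact mul_mem (mul_mem (mul_mem hs1 h) hs1) (mul_mem (mul_mem hs2 h) hs2)
    · rw [hc3' (β * lam), show tau l m (β * lam * m) (β * lam * (-2))
          = (s1 α β * tau l m (lam * α) (lam * β) * s1 α β) *
            (s3 m * tau l m (lam * α) (lam * β) * s3 m) by
        rw [s1_tau hΔ hγ _ _ (-2 * lam) (by linear_combination (-lam) * hΔ),
          s3_tau hγ, tau_mul hγ]
        exact tau_congr (by ring) (by ring)]
      exact mul_mem (mul_mem (mul_mem hs1 h) hs1) (mul_mem (mul_mem hs3 h) hs3)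
  · -- (iv)
    intro h
    rw [hc2] at h
    rw [hc3' (l * lam), show tau l m (l * lam * m) (l * lam * (-2))
        = (s2 l * tau l m (lam * (-2)) (lam * l) * s2 l) *
          (s3 m * tau l m (lam * (-2)) (lam * l) * s3 m) by
      rw [s2_tau hγ, s3_tau hγ, tau_mul hγ]
      exact tau_congr (by ring) (by ring)]
    exact mul_mem (mul_mem (mul_mem hs2 h) hs2) (mul_mem (mul_mem hs3 h) hs3)
  · -- (v)
    intro h
    rw [hc3] at h
    rw [hc2' (m * lam), show tau l m (m * lam * (-2)) (m * lam * l)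
        = (s3 m * tau l m (lam * m) (lam * (-2)) * s3 m) *
          (s2 l * tau l m (lam * m) (lam * (-2)) * s2 l) by
      rw [s3_tau hγ, s2_tau hγ, tau_mul hγ]
      exact tau_congr (by ring) (by ring)]
    exact mul_mem (mul_mem (mul_mem hs3 h) hs3) (mul_mem (mul_mem hs2 h) hs2)

end
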